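/- Let φ and ψ be sequences with Σ_{j=1}^{i} ψⱼ φ_{1+i-j} = [i = 1] (Kronecker delta) for all i ≥ 1, where φ₁ ≠ 0. Let m : ℕ≥1 → ℝ be finitely supported, define o_i = Σ_{j ≥ i} φ_{j-i+1}·m_j, and define β_i = Σ_{j=1}^{i} ψⱼ·f(i-j+1) for a function f. Then Σ_i o_i·β_i = Σ_w f(w)·m_w. -/

import Mathlib

lemma stmt_7_key (φ ψ f : ℕ → ℝ)
    (hinv : ∀ i, 1 ≤ i →
      ∑ j ∈ Finset.Icc 1 i, ψ j * φ (1 + i - j) = if i = 1 then 1 else 0)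
    (w : ℕ) (hw : 1 ≤ w) :
    ∑ i ∈ Finset.Icc 1 w, φ (w - i + 1) * ∑ k ∈ Finset.Icc 1 i, ψ k * f (i - k + 1)
      = f w := by
  have h1 : ∑ i ∈ Finset.Icc 1 w, φ (w - i + 1) * ∑ k ∈ Finset.Icc 1 i, ψ k * f (i - k + 1)
      = ∑ i ∈ Finset.Icc 1 w, ∑ k ∈ Finset.Icc 1 i, φ (w - i + 1) * (ψ k * f (i - k + 1)) := by
    simp [Finset.mul_sum]
  rw [h1]
  rw [Finset.sum_comm' (t' := Finset.Icc 1 w) (s' := fun k => Finset.Icc k w)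
    (by intro i k; simp only [Finset.mem_Icc]; omega)]
  have h2 : ∀ k ∈ Finset.Icc 1 w,
      ∑ i ∈ Finset.Icc k w, φ (w - i + 1) * (ψ k * f (i - k + 1))
      = ∑ s ∈ Finset.Icc 1 (w - k + 1), φ (w - (k + s - 1) + 1) * (ψ k * f s) := by
    intro k hk
    simp only [Finset.mem_Icc] at hk
    refine Finset.sum_nbij' (fun i => i - k + 1) (fun s => k + s - 1) ?_ ?_ ?_ ?_ ?_
    · intro i hi; simp only [Finset.mem_Icc] at *; omega
    · intro s hs; simp only [Finset.mem_Icc] at *; omega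
    · intro i hi; simp only [Finset.mem_Icc] at *; omega
    · intro s hs; simp only [Finset.mem_Icc] at *; omega
    · intro i hi
      simp only [Finset.mem_Icc] at hi
      congr 2 <;> omega
  rw [Finset.sum_congr rfl h2]
  rw [Finset.sum_comm' (t' := Finset.Icc 1 w) (s' := fun s => Finset.Icc 1 (w - s + 1))
    (by intro k s; simp only [Finset.mem_Icc]; omega)]
  have h3 : ∀ s ∈ Finset.Icc 1 w,
      ∑ k ∈ Finset.Icc 1 (w - s + 1), φ (w - (k + s - 1) + 1) * (ψ k * f s)
      = f s * ∑ k ∈ Finset.Icc 1 (w - s + 1), ψ k * φ (1 + (w - s + 1) - k) := by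
    intro s hs
    simp only [Finset.mem_Icc] at hs
    rw [Finset.mul_sum]
    refine Finset.sum_congr rfl fun k hk => ?_
    simp only [Finset.mem_Icc] at hk
    have : w - (k + s - 1) + 1 = 1 + (w - s + 1) - k := by omega
    rw [this]; ring
  rw [Finset.sum_congr rfl h3]
  have h4 : ∀ s ∈ Finset.Icc 1 w,
      f s * ∑ k ∈ Finset.Icc 1 (w - s + 1), ψ k * φ (1 + (w - s + 1) - k)
      = if s = w then f w else 0 := by
    intro s hs
    simp only [Finset.mem_Icc] at hs
    rw [hinv (w - s + 1) (by omega)]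
    by_cases h : s = w
    · simp [h]
    · have : ¬ (w - s + 1 = 1) := by omega
      rw [if_neg this, if_neg h]; simp
  rw [Finset.sum_congr rfl h4]
  simp [Finset.sum_ite_eq', hw]

/-- Unbiasedness identity of the discrete `SH_ℓ` streaming estimator: if
`∑_{j=1}^{i} ψ j · φ (1+i-j) = [i = 1]` for all `i ≥ 1`, `m` is supported on `{1,…,N}`,
`o i = ∑_{j=i}^{N} φ (j-i+1)·m j` and `β i = ∑_{j=1}^{i} ψ j · f (i-j+1)`, then
`∑ i o i · β i = ∑ w f w · m w`. -/
theorem stmt_7 (φ ψ : ℕ → ℝ) (hφ1 : φ 1 ≠ 0)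
    (hinv : ∀ i, 1 ≤ i →
      ∑ j ∈ Finset.Icc 1 i, ψ j * φ (1 + i - j) = if i = 1 then 1 else 0)
    (f : ℕ → ℝ) (N : ℕ) (m : ℕ → ℝ) (hm : ∀ j, N < j → m j = 0) :
    ∑ i ∈ Finset.Icc 1 N,
        (∑ j ∈ Finset.Icc i N, φ (j - i + 1) * m j) *
        (∑ j ∈ Finset.Icc 1 i, ψ j * f (i - j + 1))
      = ∑ w ∈ Finset.Icc 1 N, f w * m w := by
  have h1 : ∀ i, (∑ j ∈ Finset.Icc i N, φ (j - i + 1) * m j) *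
        (∑ j ∈ Finset.Icc 1 i, ψ j * f (i - j + 1))
      = ∑ j ∈ Finset.Icc i N, m j *
          (φ (j - i + 1) * ∑ k ∈ Finset.Icc 1 i, ψ k * f (i - k + 1)) := by
    intro i
    rw [Finset.sum_mul]
    exact Finset.sum_congr rfl fun j _ => by ring
  simp only [h1]
  rw [Finset.sum_comm' (t' := Finset.Icc 1 N) (s' := fun j => Finset.Icc 1 j)
    (by intro i j; simp only [Finset.mem_Icc]; omega)]
  refine Finset.sum_congr rfl fun w hw => ?_
  simp only [Finset.mem_Icc] at hw
  rw [← Finset.mul_sum, stmt_7_key φ ψ f hinv w hw.1]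
  ring
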